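/- arXiv:2101.10748 — 3 statements merged into one kernel-verified Lean document; each statement's English description precedes it below -/
import Mathlib

section
/- Geometric lower bound on the stationary tail: under (HP1)–(HP3), for every ε > 0 there exists N such that for all n ≥ N and all t ∈ ℕ, ℙ_{π_n}(τ_{x_n} > t) ≥ (1 − ε) · λ_n^t. -/
open Finset Filter

/-- The kernel of the chain killed at `x`: all entries from or to `x` are set to zero.
For `y, z ≠ x` the powers of `killed P x` agree with the powers of the principal
submatrix `[P]_x` of `P` obtained by deleting the row and the column indexed by `x`. -/
def killed {n : ℕ} (P : Matrix (Fin n) (Fin n) ℝ) (x : Fin n) :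
    Matrix (Fin n) (Fin n) ℝ :=
  Matrix.of fun y z => if y = x ∨ z = x then 0 else P y z

/-- The no-hit probability `ℙ_α(τ_x > t) = Σ_{y ≠ x} Σ_{z ≠ x} α(y)·([P]_x)^t(y,z)`. -/
def noHit {n : ℕ} (P : Matrix (Fin n) (Fin n) ℝ) (x : Fin n)
    (a : Fin n → ℝ) (t : ℕ) : ℝ :=
  ∑ y ∈ Finset.univ.erase x, ∑ z ∈ Finset.univ.erase x, a y * ((killed P x) ^ t) y z

/-- The expected number of returns to `x` within time `T`:
`R_T(x) = Σ_{t=0}^{T} P^t(x,x)`. -/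
def returns {n : ℕ} (P : Matrix (Fin n) (Fin n) ℝ) (x : Fin n) (T : ℕ) : ℝ :=
  ∑ t ∈ Finset.range (T + 1), (P ^ t) x x

section basics
variable {n : ℕ} (P : Matrix (Fin n) (Fin n) ℝ) (x : Fin n)

lemma killed_nonneg (hP : ∀ y z, 0 ≤ P y z) (y z : Fin n) : 0 ≤ killed P x y z := by
  unfold killed; dsimp; split <;> [rfl; exact hP y z]

lemma killed_le (hP : ∀ y z, 0 ≤ P y z) (y z : Fin n) : killed P x y z ≤ P y z := by
  unfold killed; dsimp; split <;> [exact hP y z; rfl]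

lemma killed_eq_of_ne {y z : Fin n} (hy : y ≠ x) (hz : z ≠ x) : killed P x y z = P y z := by
  unfold killed; dsimp; rw [if_neg]; push_neg; exact ⟨hy, hz⟩

lemma killed_x_right (y : Fin n) : killed P x y x = 0 := by
  unfold killed; dsimp; simp

lemma killed_x_left (z : Fin n) : killed P x x z = 0 := by
  unfold killed; dsimp; simp

variable (hP : ∀ y z, 0 ≤ P y z)
include hP

lemma kpow_nonneg : ∀ (t : ℕ) (y z : Fin n), 0 ≤ ((killed P x) ^ t) y z := by
  intro t
  induction t with
  | zero => intro y z; simp [Matrix.one_apply]; positivity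
  | succ t ih =>
    intro y z
    rw [pow_succ, Matrix.mul_apply]
    exact Finset.sum_nonneg fun v _ => mul_nonneg (ih y v) (killed_nonneg P x hP v z)

lemma ppow_nonneg : ∀ (t : ℕ) (y z : Fin n), 0 ≤ (P ^ t) y z := by
  intro t
  induction t with
  | zero => intro y z; simp [Matrix.one_apply]; positivity
  | succ t ih =>
    intro y z
    rw [pow_succ, Matrix.mul_apply]
    exact Finset.sum_nonneg fun v _ => mul_nonneg (ih y v) (hP v z)

lemma kpow_le_ppow : ∀ (t : ℕ) (y z : Fin n), ((killed P x) ^ t) y z ≤ (P ^ t) y z := by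
  intro t
  induction t with
  | zero => intro y z; simp
  | succ t ih =>
    intro y z
    rw [pow_succ, pow_succ, Matrix.mul_apply, Matrix.mul_apply]
    refine Finset.sum_le_sum fun v _ => ?_
    exact mul_le_mul (ih y v) (killed_le P x hP v z) (killed_nonneg P x hP v z)
      (ppow_nonneg P hP t y v)

omit hP

lemma kpow_x_right : ∀ (t : ℕ) (y : Fin n), y ≠ x → ((killed P x) ^ t) y x = 0 := by
  intro t y hy
  cases t with
  | zero => simp [Matrix.one_apply_ne hy]
  | succ t =>
    rw [pow_succ, Matrix.mul_apply]
    exact Finset.sum_eq_zero fun v _ => by rw [killed_x_right, mul_zero]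

lemma kpow_x_left : ∀ (t : ℕ) (z : Fin n), z ≠ x → ((killed P x) ^ t) x z = 0 := by
  intro t z hz
  cases t with
  | zero => simp [Matrix.one_apply_ne (Ne.symm hz)]
  | succ t =>
    rw [pow_succ', Matrix.mul_apply]
    exact Finset.sum_eq_zero fun v _ => by rw [killed_x_left, zero_mul]

lemma ppow_rowsum (hrow : ∀ y, ∑ z, P y z = 1) :
    ∀ (t : ℕ) (y : Fin n), ∑ z, (P ^ t) y z = 1 := by
  intro t
  induction t with
  | zero => intro y; simp [Matrix.one_apply]
  | succ t ih =>
    intro y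
    simp only [pow_succ, Matrix.mul_apply]
    rw [Finset.sum_comm]
    calc ∑ v, ∑ z, (P ^ t) y v * P v z = ∑ v, (P ^ t) y v * ∑ z, P v z := by
          simp [Finset.mul_sum]
      _ = 1 := by simp only [hrow, mul_one]; exact ih y

lemma vecMul_ppow_stat (pi : Fin n → ℝ) (hstat : Matrix.vecMul pi P = pi) :
    ∀ t : ℕ, Matrix.vecMul pi (P ^ t) = pi := by
  intro t
  induction t with
  | zero => simp
  | succ t ih => rw [pow_succ, ← Matrix.vecMul_vecMul, ih, hstat]

lemma vecMul_kpow_qs (mu : Fin n → ℝ) (lam : ℝ)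
    (hqs : Matrix.vecMul mu (killed P x) = lam • mu) :
    ∀ t : ℕ, Matrix.vecMul mu ((killed P x) ^ t) = lam ^ t • mu := by
  intro t
  induction t with
  | zero => simp
  | succ t ih =>
    rw [pow_succ, ← Matrix.vecMul_vecMul, ih, Matrix.smul_vecMul, hqs, smul_smul, ← pow_succ]

end basics

set_option maxHeartbeats 1600000 in
lemma main_bound {n : ℕ} (P : Matrix (Fin n) (Fin n) ℝ) (x : Fin n)
    (pi mu : Fin n → ℝ) (lam : ℝ) (T : ℕ) (e d : ℝ)
    (he : 0 < e) (he2 : e ≤ 1 / 2)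
    (hP : ∀ y z, 0 ≤ P y z) (hrow : ∀ y, ∑ z, P y z = 1)
    (hpinn : ∀ y, 0 ≤ pi y) (hpisum : ∑ y, pi y = 1)
    (hstat : Matrix.vecMul pi P = pi)
    (hkirr : ∀ y z : Fin n, y ≠ x → z ≠ x → ∃ t : ℕ, 0 < ((killed P x) ^ t) y z)
    (hlam0 : 0 < lam) (hlam1 : lam < 1)
    (hmunn : ∀ y, 0 ≤ mu y) (hmux : mu x = 0) (hmusum : ∑ y, mu y = 1)
    (hqs : Matrix.vecMul mu (killed P x) = lam • mu)
    (hd0 : 0 ≤ d)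
    (hmix : ∀ y z, |(P ^ T) y z - pi z| ≤ d)
    (hdn : (n : ℝ) ^ 2 * d ≤ e / 8)
    (hTpi : (T : ℝ) * pi x ≤ (e / 32) ^ 2)
    (hT1 : 1 ≤ T)
    (hpilb : ∀ y, 1 ≤ (n : ℝ) ^ 2 * pi y) :
    ∀ t, (1 - e) * lam ^ t ≤ noHit P x pi t := by
  set K := killed P x with hKdef
  set A : Finset (Fin n) := Finset.univ.erase x with hAdef
  have hxA : x ∉ A := Finset.notMem_erase x _
  have hmemA : ∀ y : Fin n, y ∈ A ↔ y ≠ x := by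
    intro y; simp [hAdef]
  have hn1 : (1 : ℝ) ≤ (n : ℝ) := by
    have : 0 < n := x.pos
    exact_mod_cast this
  have hn2 : (0 : ℝ) < (n : ℝ) ^ 2 := by positivity
  -- h and u
  set h : ℕ → Fin n → ℝ := fun t y => ∑ z ∈ A, (K ^ t) y z with hhdef
  set u : ℕ → ℝ := fun t => ∑ y ∈ A, pi y * h t y with hudef
  have hu_noHit : ∀ t, noHit P x pi t = u t := by
    intro t
    unfold noHit
    simp only [hudef, hhdef, Finset.mul_sum, hKdef, hAdef]
  have hh0 : ∀ t y, 0 ≤ h t y := by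
    intro t y
    exact Finset.sum_nonneg fun z _ => kpow_nonneg P x hP t y z
  have hsumK : ∀ (t : ℕ) (y : Fin n), y ≠ x → ∑ z, (K ^ t) y z = h t y := by
    intro t y hy
    rw [hhdef]
    exact (Finset.sum_erase _ (kpow_x_right P x t y hy)).symm
  have hh_le_one : ∀ t y, y ≠ x → h t y ≤ 1 := by
    intro t y hy
    rw [← hsumK t y hy, ← ppow_rowsum P hrow t y]
    exact Finset.sum_le_sum fun z _ => kpow_le_ppow P x hP t y z
  
  -- entrywise remainder bound
  have hrem : ∀ (t : ℕ) (y z : Fin n), y ≠ x → (P ^ t) y z - (K ^ t) y z ≤ 1 - h t y := by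
    intro t y z hy
    have hsum : ∑ w, ((P ^ t) y w - (K ^ t) y w) = 1 - h t y := by
      rw [Finset.sum_sub_distrib, ppow_rowsum P hrow t y, hsumK t y hy]
    rw [← hsum]
    exact Finset.single_le_sum
      (fun w _ => sub_nonneg.mpr (kpow_le_ppow P x hP t y w)) (Finset.mem_univ z)
  -- stationarity as sums
  have hvm : ∀ w, ∑ v, pi v * P v w = pi w := by
    intro w
    have := congrFun hstat w
    rw [← this]
    simp [Matrix.vecMul, dotProduct]
  -- nu
  set nu : ℕ → Fin n → ℝ := fun t w => ∑ y ∈ A, pi y * (K ^ t) y w with hnudef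
  have hnu0 : ∀ t w, 0 ≤ nu t w := fun t w =>
    Finset.sum_nonneg fun y _ => mul_nonneg (hpinn y) (kpow_nonneg P x hP t y w)
  have hnux : ∀ t, nu t x = 0 := by
    intro t
    refine Finset.sum_eq_zero fun y hy => ?_
    rw [kpow_x_right P x t y ((hmemA y).mp hy), mul_zero]
  have hnu_succ : ∀ t w, nu (t + 1) w = ∑ v, nu t v * K v w := by
    intro t w
    simp only [hnudef, pow_succ, Matrix.mul_apply, Finset.mul_sum, Finset.sum_mul]
    rw [Finset.sum_comm]
    refine Finset.sum_congr rfl fun v _ => Finset.sum_congr rfl fun y _ => by ring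
  have hnu_le : ∀ t w, nu t w ≤ pi w := by
    intro t
    induction t with
    | zero =>
      intro w
      by_cases hw : w = x
      · rw [hw, hnux]; exact hpinn x
      · have : nu 0 w = pi w := by
          simp only [hnudef, pow_zero]
          rw [Finset.sum_eq_single w]
          · rw [Matrix.one_apply_eq, mul_one]
          · intro y _ hyw; rw [Matrix.one_apply_ne hyw, mul_zero]
          · intro hw'; exact absurd ((hmemA w).mpr hw) hw'
        rw [this]
    | succ t ih =>
      intro w
      rw [hnu_succ t w, ← hvm w]
      refine Finset.sum_le_sum fun v _ => ?_
      exact mul_le_mul (ih v) (killed_le P x hP v w) (killed_nonneg P x hP v w) (hpinn v)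
  have hu_nu : ∀ t, u t = ∑ w ∈ A, nu t w := by
    intro t
    simp only [hudef, hhdef, hnudef, Finset.mul_sum]
    rw [Finset.sum_comm]
  have hu0 : u 0 = 1 - pi x := by
    have h1 : ∀ y ∈ A, pi y * h 0 y = pi y := by
      intro y hy
      have : h 0 y = 1 := by
        rw [← hsumK 0 y ((hmemA y).mp hy)]
        simp [Matrix.one_apply]
      rw [this, mul_one]
    rw [hudef]
    calc (∑ y ∈ A, pi y * h 0 y) = ∑ y ∈ A, pi y := Finset.sum_congr rfl h1
      _ = 1 - pi x := by
          rw [hAdef, Finset.sum_erase_eq_sub (Finset.mem_univ x), hpisum]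
  
  -- one-step decrement
  have hKrowA : ∀ v : Fin n, v ≠ x → ∑ w ∈ A, K v w = 1 - P v x := by
    intro v hv
    have h1 : ∀ w ∈ A, K v w = P v w := fun w hw =>
      killed_eq_of_ne P x hv ((hmemA w).mp hw)
    rw [Finset.sum_congr rfl h1, hAdef, Finset.sum_erase_eq_sub (Finset.mem_univ x), hrow v]
  have hdec : ∀ t, u t - pi x ≤ u (t + 1) := by
    intro t
    have e1 : u (t + 1) = ∑ v, nu t v * ∑ w ∈ A, K v w := by
      rw [hu_nu (t + 1)]
      simp only [hnu_succ t]
      rw [Finset.sum_comm]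
      exact Finset.sum_congr rfl fun v _ => (Finset.mul_sum _ _ _).symm
    have e2a : ∑ v ∈ A, nu t v * ∑ w ∈ A, K v w = ∑ v, nu t v * ∑ w ∈ A, K v w := by
      rw [hAdef]
      exact Finset.sum_erase _ (by rw [hnux t, zero_mul])
    have e2 : u (t + 1) = ∑ v ∈ A, nu t v * (1 - P v x) := by
      rw [e1, ← e2a]
      exact Finset.sum_congr rfl fun v hv => by rw [hKrowA v ((hmemA v).mp hv)]
    have e3 : u t - u (t + 1) = ∑ v ∈ A, nu t v * P v x := by
      rw [e2, hu_nu t, ← Finset.sum_sub_distrib]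
      exact Finset.sum_congr rfl fun v _ => by ring
    have e4 : ∑ v ∈ A, nu t v * P v x ≤ pi x := by
      calc ∑ v ∈ A, nu t v * P v x ≤ ∑ v ∈ A, pi v * P v x :=
            Finset.sum_le_sum fun v _ => mul_le_mul_of_nonneg_right (hnu_le t v) (hP v x)
        _ ≤ ∑ v, pi v * P v x := by
            refine Finset.sum_le_sum_of_subset_of_nonneg (Finset.subset_univ A) ?_
            exact fun v _ _ => mul_nonneg (hpinn v) (hP v x)
        _ = pi x := hvm x
    linarith
  have hutel : ∀ t : ℕ, u 0 - t * pi x ≤ u t := by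
    intro t
    induction t with
    | zero => simp
    | succ t ih =>
      have := hdec t
      push_cast
      push_cast at ih
      linarith
  -- pi x positivity, beta
  have hpix : 0 < pi x := by nlinarith [hpilb x]
  have hT1' : (1 : ℝ) ≤ (T : ℝ) := by exact_mod_cast hT1
  have hTpi0 : 0 < (T : ℝ) * pi x := by positivity
  set beta : ℝ := Real.sqrt ((T : ℝ) * pi x) with hbdef
  have hb0 : 0 < beta := Real.sqrt_pos.mpr hTpi0
  have hb2 : beta ^ 2 = (T : ℝ) * pi x := Real.sq_sqrt hTpi0.le
  have hble : beta ≤ e / 32 := by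
    rw [hbdef]
    calc Real.sqrt ((T : ℝ) * pi x) ≤ Real.sqrt ((e / 32) ^ 2) := Real.sqrt_le_sqrt hTpi
      _ = e / 32 := Real.sqrt_sq (by positivity)
  -- mu facts
  have hmuK : ∀ (t : ℕ) (z : Fin n), ∑ y, mu y * (K ^ t) y z = lam ^ t * mu z := by
    intro t z
    have := congrFun (vecMul_kpow_qs P x mu lam hqs t) z
    rw [Matrix.vecMul, Pi.smul_apply, smul_eq_mul] at this
    rw [← this]
    simp [dotProduct, hKdef]
  have hmupos : ∀ z : Fin n, z ≠ x → 0 < mu z := by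
    intro z hz
    obtain ⟨y₀, hy₀⟩ : ∃ y, mu y ≠ 0 := by
      by_contra hcon
      push_neg at hcon
      simp [hcon] at hmusum
    have hy₀pos : 0 < mu y₀ := lt_of_le_of_ne (hmunn y₀) (Ne.symm hy₀)
    have hy₀x : y₀ ≠ x := fun hh => hy₀ (hh ▸ hmux)
    obtain ⟨t, hKt⟩ := hkirr y₀ z hy₀x hz
    have hlt : 0 < lam ^ t * mu z := by
      rw [← hmuK t z]
      have h1 : 0 < mu y₀ * (K ^ t) y₀ z := mul_pos hy₀pos hKt
      have h2 : ∀ y, 0 ≤ mu y * (K ^ t) y z := fun y =>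
        mul_nonneg (hmunn y) (kpow_nonneg P x hP t y z)
      calc (0:ℝ) < mu y₀ * (K ^ t) y₀ z := h1
        _ ≤ ∑ y, mu y * (K ^ t) y z :=
            Finset.single_le_sum (fun y _ => h2 y) (Finset.mem_univ y₀)
    rcases mul_pos_iff.mp hlt with ⟨_, hz'⟩ | ⟨hneg, _⟩
    · exact hz'
    · exact absurd (pow_pos hlam0 t) (asymm hneg)
  
  have hlamt : ∀ t : ℕ, (0:ℝ) < lam ^ t := fun t => pow_pos hlam0 t
  -- lam^t as mu-average of h
  have hlam_h : ∀ t : ℕ, ∑ y ∈ A, mu y * h t y = lam ^ t := by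
    intro t
    have e1 : ∀ z ∈ A, ∑ y ∈ A, mu y * (K ^ t) y z = lam ^ t * mu z := by
      intro z _
      rw [← hmuK t z, hAdef]
      exact Finset.sum_erase _ (by rw [hmux, zero_mul])
    calc ∑ y ∈ A, mu y * h t y = ∑ y ∈ A, ∑ z ∈ A, mu y * (K ^ t) y z := by
          simp only [hhdef, Finset.mul_sum]
      _ = ∑ z ∈ A, ∑ y ∈ A, mu y * (K ^ t) y z := Finset.sum_comm
      _ = ∑ z ∈ A, lam ^ t * mu z := Finset.sum_congr rfl e1
      _ = lam ^ t * ∑ z ∈ A, mu z := by rw [Finset.mul_sum]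
      _ = lam ^ t := by
          rw [hAdef, Finset.sum_erase_eq_sub (Finset.mem_univ x), hmusum, hmux]
          ring
  -- mixing
  have hPTle : ∀ y z, (P ^ T) y z ≤ pi z + d := by
    intro y z
    have := abs_le.mp (hmix y z)
    linarith [this.2]
  have hstar : ∀ z, lam ^ T * mu z ≤ pi z + d := by
    intro z
    calc lam ^ T * mu z = ∑ y, mu y * (K ^ T) y z := (hmuK T z).symm
      _ ≤ ∑ y, mu y * (P ^ T) y z :=
          Finset.sum_le_sum fun y _ =>
            mul_le_mul_of_nonneg_left (kpow_le_ppow P x hP T y z) (hmunn y)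
      _ ≤ ∑ y, mu y * (pi z + d) :=
          Finset.sum_le_sum fun y _ =>
            mul_le_mul_of_nonneg_left (hPTle y z) (hmunn y)
      _ = pi z + d := by rw [← Finset.sum_mul, hmusum, one_mul]
  -- the good set G
  set G : Finset (Fin n) := A.filter (fun y => 1 - beta ≤ h T y) with hGdef
  have hGsub : G ⊆ A := Finset.filter_subset _ _
  have hGx : ∀ y ∈ G, y ≠ x := fun y hy => (hmemA y).mp (hGsub hy)
  have hGh : ∀ y ∈ G, 1 - beta ≤ h T y := by
    intro y hy
    exact (Finset.mem_filter.mp hy).2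
  -- pi mass outside G is at most beta
  have hsum_one_sub_h : ∑ y ∈ A, pi y * (1 - h T y) ≤ beta ^ 2 := by
    have e1 : ∑ y ∈ A, pi y * (1 - h T y) = (1 - pi x) - u T := by
      rw [hudef]
      have : ∑ y ∈ A, pi y * (1 - h T y) = (∑ y ∈ A, pi y) - ∑ y ∈ A, pi y * h T y := by
        rw [← Finset.sum_sub_distrib]
        exact Finset.sum_congr rfl fun y _ => by ring
      rw [this, hAdef, Finset.sum_erase_eq_sub (Finset.mem_univ x), hpisum]
    have e2 := hutel T
    rw [hu0] at e2
    rw [e1, hb2]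
    linarith
  have hAG : ∑ y ∈ A \ G, pi y ≤ beta := by
    have e1 : ∀ y ∈ A \ G, pi y * beta ≤ pi y * (1 - h T y) := by
      intro y hy
      obtain ⟨hyA, hyG⟩ := Finset.mem_sdiff.mp hy
      have : ¬ (1 - beta ≤ h T y) := by
        intro hcon
        exact hyG (Finset.mem_filter.mpr ⟨hyA, hcon⟩)
      push_neg at this
      exact mul_le_mul_of_nonneg_left (by linarith) (hpinn y)
    have e2 : (∑ y ∈ A \ G, pi y) * beta ≤ ∑ y ∈ A \ G, pi y * (1 - h T y) := by
      rw [Finset.sum_mul]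
      exact Finset.sum_le_sum e1
    have e3 : ∑ y ∈ A \ G, pi y * (1 - h T y) ≤ ∑ y ∈ A, pi y * (1 - h T y) := by
      refine Finset.sum_le_sum_of_subset_of_nonneg (Finset.sdiff_subset) ?_
      intro y hy _
      exact mul_nonneg (hpinn y) (by linarith [hh_le_one T y ((hmemA y).mp hy)])
    have := le_trans e2 (le_trans e3 hsum_one_sub_h)
    calc ∑ y ∈ A \ G, pi y = (∑ y ∈ A \ G, pi y) * beta / beta := by
          field_simp
      _ ≤ beta ^ 2 / beta := (div_le_div_iff_of_pos_right hb0).mpr this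
      _ = beta := by field_simp [pow_two]
  
  have hpixsmall : pi x ≤ (e / 32) ^ 2 := by
    have : pi x = 1 * pi x := (one_mul _).symm
    nlinarith [mul_le_mul_of_nonneg_right hT1' (hpinn x)]
  have hpix64 : pi x ≤ 1 / 4096 := by
    have h1 : (e / 32) ^ 2 ≤ (1 / 64) ^ 2 := by
      apply pow_le_pow_left₀ (by positivity) (by linarith)
    nlinarith
  have hGne : G.Nonempty := by
    rw [Finset.nonempty_iff_ne_empty]
    intro hcon
    have : A \ G = A := by rw [hcon, Finset.sdiff_empty]
    rw [this] at hAG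
    have : ∑ y ∈ A, pi y = 1 - pi x := by
      rw [hAdef, Finset.sum_erase_eq_sub (Finset.mem_univ x), hpisum]
    linarith
  -- the function g and its lower bound on G
  set g : Fin n → ℝ := fun w => ∑ z ∈ G, (K ^ T) w z with hgdef
  have hnd : (n : ℝ) * d ≤ e / 8 := by
    have h1 : (n : ℝ) ≤ (n : ℝ) ^ 2 := by nlinarith
    have h2 : (n : ℝ) * d ≤ (n : ℝ) ^ 2 * d := mul_le_mul_of_nonneg_right h1 hd0
    linarith
  set g0 : ℝ := 1 - 2 * beta - (n : ℝ) * d with hg0def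
  have hg0pos : 0 < g0 := by
    rw [hg0def]; linarith
  have hglb : ∀ w : Fin n, w ≠ x → h T w - beta - (n : ℝ) * d ≤ g w := by
    intro w hw
    have e1 : h T w - g w = ∑ z ∈ A \ G, (K ^ T) w z := by
      rw [hhdef, hgdef]
      dsimp only
      rw [← Finset.sum_sdiff hGsub]
      ring
    have e2 : ∑ z ∈ A \ G, (K ^ T) w z ≤ ∑ z ∈ A \ G, (pi z + d) := by
      refine Finset.sum_le_sum fun z _ => ?_
      exact le_trans (kpow_le_ppow P x hP T w z) (hPTle w z)
    have e3 : ∑ z ∈ A \ G, (pi z + d) ≤ beta + (n : ℝ) * d := by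
      rw [Finset.sum_add_distrib]
      have c1 : ∑ z ∈ A \ G, (d : ℝ) = (A \ G).card * d := by
        rw [Finset.sum_const, nsmul_eq_mul]
      have c2 : ((A \ G).card : ℝ) ≤ (n : ℝ) := by
        have := Finset.card_le_card (Finset.subset_univ (A \ G))
        rw [Finset.card_univ, Fintype.card_fin] at this
        exact_mod_cast this
      have c3 : ∑ z ∈ A \ G, (d : ℝ) ≤ (n : ℝ) * d := by
        rw [c1]
        exact mul_le_mul_of_nonneg_right c2 hd0
      linarith [hAG]
    linarith
  have hgG : ∀ w ∈ G, g0 ≤ g w := by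
    intro w hw
    have := hglb w (hGx w hw)
    have := hGh w hw
    rw [hg0def]
    linarith
  have hg_nonneg : ∀ w, 0 ≤ g w :=
    fun w => Finset.sum_nonneg fun z _ => kpow_nonneg P x hP T w z
  -- iteration: survival within G for k blocks of length T
  have hiter : ∀ k : ℕ, ∀ y ∈ G, g0 ^ k ≤ ∑ z ∈ G, (K ^ (T * k)) y z := by
    intro k
    induction k with
    | zero =>
      intro y hy
      have h1 : ∑ z ∈ G, (K ^ (T * 0)) y z = 1 := by
        rw [Nat.mul_zero, pow_zero]
        rw [Finset.sum_eq_single y]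
        · exact Matrix.one_apply_eq y
        · intro z _ hzy; exact Matrix.one_apply_ne (Ne.symm hzy)
        · intro hy'; exact absurd hy hy'
      rw [h1, pow_zero]
    | succ k ih =>
      intro y hy
      have e0 : T * (k + 1) = T * k + T := by ring
      have e1 : ∑ z ∈ G, (K ^ (T * (k + 1))) y z
          = ∑ w : Fin n, (K ^ (T * k)) y w * g w := by
        rw [e0, pow_add]
        simp only [Matrix.mul_apply, hgdef]
        rw [Finset.sum_comm]
        exact Finset.sum_congr rfl fun w _ => (Finset.mul_sum _ _ _).symm
      have e2 : ∑ w ∈ G, (K ^ (T * k)) y w * g w ≤ ∑ w : Fin n, (K ^ (T * k)) y w * g w := by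
        refine Finset.sum_le_sum_of_subset_of_nonneg (Finset.subset_univ G) ?_
        exact fun w _ _ => mul_nonneg (kpow_nonneg P x hP _ y w) (hg_nonneg w)
      have e3 : g0 ^ k * g0 ≤ ∑ w ∈ G, (K ^ (T * k)) y w * g w := by
        calc g0 ^ k * g0 ≤ (∑ w ∈ G, (K ^ (T * k)) y w) * g0 :=
              mul_le_mul_of_nonneg_right (ih y hy) hg0pos.le
          _ = ∑ w ∈ G, (K ^ (T * k)) y w * g0 := Finset.sum_mul _ _ _
          _ ≤ ∑ w ∈ G, (K ^ (T * k)) y w * g w :=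
              Finset.sum_le_sum fun w hw =>
                mul_le_mul_of_nonneg_left (hgG w hw) (kpow_nonneg P x hP _ y w)
      rw [e1, pow_succ]
      exact le_trans e3 e2
  -- mu mass of G
  set m : ℝ := ∑ y ∈ G, mu y with hmdef
  have hm0 : 0 < m := by
    rw [hmdef]
    exact Finset.sum_pos (fun y hy => hmupos y (hGx y hy)) hGne
  -- lam ^ T ≥ g0
  have hkey : ∀ k : ℕ, m * g0 ^ k ≤ (lam ^ T) ^ k := by
    intro k
    have e1 : (lam ^ T) ^ k = ∑ y ∈ A, mu y * h (T * k) y := by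
      rw [hlam_h (T * k), ← pow_mul]
    have e2 : ∑ y ∈ G, mu y * h (T * k) y ≤ ∑ y ∈ A, mu y * h (T * k) y := by
      refine Finset.sum_le_sum_of_subset_of_nonneg hGsub ?_
      exact fun y _ _ => mul_nonneg (hmunn y) (hh0 _ y)
    have e3 : ∀ y ∈ G, mu y * g0 ^ k ≤ mu y * h (T * k) y := by
      intro y hy
      refine mul_le_mul_of_nonneg_left ?_ (hmunn y)
      refine le_trans (hiter k y hy) ?_
      rw [hhdef]
      refine Finset.sum_le_sum_of_subset_of_nonneg hGsub ?_
      exact fun z _ _ => kpow_nonneg P x hP _ y z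
    calc m * g0 ^ k = ∑ y ∈ G, mu y * g0 ^ k := by rw [hmdef, Finset.sum_mul]
      _ ≤ ∑ y ∈ G, mu y * h (T * k) y := Finset.sum_le_sum e3
      _ ≤ ∑ y ∈ A, mu y * h (T * k) y := e2
      _ = (lam ^ T) ^ k := e1.symm
  have hlamT : g0 ≤ lam ^ T := by
    by_contra hcon
    push_neg at hcon
    set r : ℝ := lam ^ T / g0 with hrdef
    have hr0 : 0 ≤ r := div_nonneg (hlamt T).le hg0pos.le
    have hr1 : r < 1 := (div_lt_one hg0pos).mpr hcon
    have htend : Filter.Tendsto (fun k => r ^ k) Filter.atTop (nhds 0) :=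
      tendsto_pow_atTop_nhds_zero_of_lt_one hr0 hr1
    have hev : ∀ᶠ k in Filter.atTop, r ^ k < m :=
      htend.eventually (gt_mem_nhds hm0)
    obtain ⟨k, hk⟩ := hev.exists
    have h1 : m * g0 ^ k ≤ (lam ^ T) ^ k := hkey k
    have h2 : (lam ^ T) ^ k = r ^ k * g0 ^ k := by
      rw [← mul_pow, hrdef, div_mul_cancel₀]
      exact hg0pos.ne'
    have h3 : 0 < g0 ^ k := pow_pos hg0pos k
    have h4 : m ≤ r ^ k := by
      rw [h2] at h1
      exact le_of_mul_le_mul_right (by linarith) h3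
    linarith
  
  -- final bound
  have hg0e : 1 - 3 * e / 16 ≤ g0 := by rw [hg0def]; linarith
  have hg0T : 1 - 3 * e / 16 ≤ lam ^ T := le_trans hg0e hlamT
  intro t
  rw [hu_noHit t]
  have hut0 : 0 ≤ u t := by
    rw [hudef]
    exact Finset.sum_nonneg fun y _ => mul_nonneg (hpinn y) (hh0 t y)
  have hS : ∑ y ∈ A, h t y ≤ (n : ℝ) ^ 2 * u t := by
    calc ∑ y ∈ A, h t y ≤ ∑ y ∈ A, ((n : ℝ) ^ 2 * pi y) * h t y :=
          Finset.sum_le_sum fun y _ => le_mul_of_one_le_left (hh0 t y) (hpilb y)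
      _ = (n : ℝ) ^ 2 * u t := by
          rw [hudef]
          dsimp only
          rw [Finset.mul_sum]
          exact Finset.sum_congr rfl fun y _ => by ring
  have hmain : lam ^ T * lam ^ t ≤ u t + d * ((n : ℝ) ^ 2 * u t) := by
    have e1 : ∑ y ∈ A, (lam ^ T * mu y) * h t y ≤ ∑ y ∈ A, (pi y + d) * h t y :=
      Finset.sum_le_sum fun y _ => mul_le_mul_of_nonneg_right (hstar y) (hh0 t y)
    have e2 : ∑ y ∈ A, (lam ^ T * mu y) * h t y = lam ^ T * lam ^ t := by
      rw [← hlam_h t, Finset.mul_sum]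
      exact Finset.sum_congr rfl fun y _ => by ring
    have e3 : ∑ y ∈ A, (pi y + d) * h t y = u t + d * ∑ y ∈ A, h t y := by
      rw [hudef, Finset.mul_sum, ← Finset.sum_add_distrib]
      exact Finset.sum_congr rfl fun y _ => by ring
    have e4 : d * ∑ y ∈ A, h t y ≤ d * ((n : ℝ) ^ 2 * u t) :=
      mul_le_mul_of_nonneg_left hS hd0
    rw [e2] at e1
    rw [e3] at e1
    linarith
  have A1 : lam ^ T * lam ^ t ≤ u t * (1 + e / 8) := by
    have h5 : 0 ≤ e / 8 - (n : ℝ) ^ 2 * d := by linarith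
    nlinarith [mul_nonneg h5 hut0]
  have A2 : (1 - 3 * e / 16) * lam ^ t ≤ lam ^ T * lam ^ t :=
    mul_le_mul_of_nonneg_right hg0T (hlamt t).le
  nlinarith [A1, A2, hlamt t, hut0, mul_pos (hlamt t) he, mul_nonneg (mul_pos (hlamt t) he).le he.le]

theorem geometric_lower_bound_stationary_tail
    (P : (n : ℕ) → Matrix (Fin n) (Fin n) ℝ)
    (pi : (n : ℕ) → Fin n → ℝ)
    (x : (n : ℕ) → Fin n)
    (T : ℕ → ℕ) (c : ℝ)
    (hc : 2 < c)
    (hT : Filter.Tendsto T Filter.atTop Filter.atTop)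
    (hnn : ∀ n : ℕ, 2 ≤ n → ∀ y z : Fin n, 0 ≤ P n y z)
    (hrow : ∀ n : ℕ, 2 ≤ n → ∀ y : Fin n, ∑ z, P n y z = 1)
    (hirr : ∀ n : ℕ, 2 ≤ n → ∀ y z : Fin n, ∃ t : ℕ, 0 < (P n ^ t) y z)
    (hpinn : ∀ n : ℕ, 2 ≤ n → ∀ y : Fin n, 0 ≤ pi n y)
    (hpisum : ∀ n : ℕ, 2 ≤ n → ∑ y, pi n y = 1)
    (hpistat : ∀ n : ℕ, 2 ≤ n → Matrix.vecMul (pi n) (P n) = pi n)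
    (hpiuniq : ∀ n : ℕ, 2 ≤ n → ∀ rho : Fin n → ℝ, (∀ y, 0 ≤ rho y) →
      (∑ y, rho y = 1) → Matrix.vecMul rho (P n) = rho → rho = pi n)
    (hkirr : ∀ n : ℕ, 2 ≤ n → ∀ y z : Fin n, y ≠ x n → z ≠ x n →
      ∃ t : ℕ, 0 < ((killed (P n) (x n)) ^ t) y z)
    (lam : ℕ → ℝ) (mu : (n : ℕ) → Fin n → ℝ)
    (hlam : ∀ n : ℕ, 2 ≤ n → lam n ∈ Set.Ioo (0 : ℝ) 1)
    (hmunn : ∀ n : ℕ, 2 ≤ n → ∀ y : Fin n, 0 ≤ mu n y)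
    (hmux : ∀ n : ℕ, 2 ≤ n → mu n (x n) = 0)
    (hmusum : ∀ n : ℕ, 2 ≤ n → ∑ y, mu n y = 1)
    (hmuqs : ∀ n : ℕ, 2 ≤ n →
      Matrix.vecMul (mu n) (killed (P n) (x n)) = lam n • mu n)
    (HP1 : ∀ ε : ℝ, 0 < ε → ∃ N : ℕ, ∀ n : ℕ, N ≤ n → ∀ y z : Fin n,
      (n : ℝ) ^ c * |(P n ^ T n) y z - pi n z| < ε)
    (HP2 : ∀ ε : ℝ, 0 < ε → ∃ N : ℕ, ∀ n : ℕ, N ≤ n → ∀ y : Fin n,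
      (T n : ℝ) * pi n y < ε)
    (HP3 : ∀ M : ℝ, ∃ N : ℕ, ∀ n : ℕ, N ≤ n → ∀ y : Fin n,
      M < (n : ℝ) ^ 2 * pi n y)
    :
    ∀ ε : ℝ, 0 < ε → ∃ N : ℕ, ∀ n : ℕ, N ≤ n → ∀ t : ℕ,
      (1 - ε) * lam n ^ t ≤ noHit (P n) (x n) (pi n) t := by
  intro ε hε
  set e : ℝ := min ε (1 / 2) with hedef
  have he : 0 < e := lt_min hε (by norm_num)
  have he2 : e ≤ 1 / 2 := min_le_right _ _
  have heε : e ≤ ε := min_le_left _ _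
  obtain ⟨N₁, hN₁⟩ := HP1 (e / 8) (by positivity)
  obtain ⟨N₂, hN₂⟩ := HP2 ((e / 32) ^ 2) (by positivity)
  obtain ⟨N₃, hN₃⟩ := HP3 1
  obtain ⟨N₄, hN₄⟩ : ∃ N : ℕ, ∀ n, N ≤ n → 1 ≤ T n := by
    have := hT.eventually_ge_atTop 1
    rw [Filter.eventually_atTop] at this
    obtain ⟨N, hN⟩ := this
    exact ⟨N, fun n hn => hN n hn⟩
  refine ⟨max (max N₁ N₂) (max (max N₃ N₄) 2), fun n hn => ?_⟩
  have hn1 : N₁ ≤ n := le_trans (by omega) hn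
  have hn2' : N₂ ≤ n := le_trans (by omega) hn
  have hn3 : N₃ ≤ n := le_trans (by omega) hn
  have hn4 : N₄ ≤ n := le_trans (by omega) hn
  have hn2 : 2 ≤ n := le_trans (by omega) hn
  have hnpos : (0 : ℝ) < (n : ℝ) := by
    have : 0 < n := by omega
    exact_mod_cast this
  have hnc : (0 : ℝ) < (n : ℝ) ^ c := Real.rpow_pos_of_pos hnpos c
  set d : ℝ := (e / 8) / (n : ℝ) ^ c with hddef
  have hd0 : 0 ≤ d := by positivity
  have hmix : ∀ y z : Fin n, |(P n ^ T n) y z - pi n z| ≤ d := by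
    intro y z
    have h1 := hN₁ n hn1 y z
    rw [hddef, le_div_iff₀ hnc]
    nlinarith
  have hpow2c : ((n : ℝ)) ^ (2 : ℕ) ≤ (n : ℝ) ^ c := by
    have h1 : ((n : ℝ)) ^ (2 : ℕ) = (n : ℝ) ^ ((2 : ℕ) : ℝ) := (Real.rpow_natCast _ 2).symm
    rw [h1]
    apply Real.rpow_le_rpow_of_exponent_le
    · have : (1 : ℕ) ≤ n := by omega
      exact_mod_cast this
    · push_cast
      linarith
  have hdn : (n : ℝ) ^ 2 * d ≤ e / 8 := by
    calc (n : ℝ) ^ 2 * d = ((n : ℝ) ^ 2 / (n : ℝ) ^ c) * (e / 8) := by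
          rw [hddef]; ring
      _ ≤ 1 * (e / 8) := by
          apply mul_le_mul_of_nonneg_right _ (by positivity)
          exact (div_le_one hnc).mpr hpow2c
      _ = e / 8 := one_mul _
  have hTpi : (T n : ℝ) * pi n (x n) ≤ (e / 32) ^ 2 := (hN₂ n hn2' (x n)).le
  have hpilb : ∀ y : Fin n, 1 ≤ (n : ℝ) ^ 2 * pi n y := fun y => (hN₃ n hn3 y).le
  have hres := main_bound (P n) (x n) (pi n) (mu n) (lam n) (T n) e d he he2
    (hnn n hn2) (hrow n hn2) (hpinn n hn2) (hpisum n hn2) (hpistat n hn2)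
    (hkirr n hn2) (hlam n hn2).1 (hlam n hn2).2
    (hmunn n hn2) (hmux n hn2) (hmusum n hn2) (hmuqs n hn2)
    hd0 hmix hdn hTpi (hN₄ n hn4) hpilb
  intro t
  refine le_trans ?_ (hres t)
  apply mul_le_mul_of_nonneg_right (by linarith)
  exact pow_nonneg (hlam n hn2).1.le t
end

section
/- Evolution of the quasi-stationary distribution under the full chain: for every T ∈ ℕ and every y ≠ x, (μ⋆ P^T)(y) ≤ λ^T μ⋆(y) + (1 − λ) Σ_{s=0}^{T−1} P^s(x,y), where μ⋆ is extended to a probability vector on X by setting μ⋆(x) = 0 and μ⋆ P^T denotes the left action of the T-th matrix power of P. -/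
open Finset Filter

theorem qsd_evolution_upper_bound
    {m : ℕ} (P : Matrix (Fin m) (Fin m) ℝ) (x : Fin m)
    (hnn : ∀ y z : Fin m, 0 ≤ P y z)
    (hrow : ∀ y : Fin m, ∑ z, P y z = 1)
    (hirr : ∀ y z : Fin m, ∃ t : ℕ, 0 < (P ^ t) y z)
    (hkirr : ∀ y z : Fin m, y ≠ x → z ≠ x → ∃ t : ℕ, 0 < ((killed P x) ^ t) y z)
    (lam : ℝ) (hlam : lam ∈ Set.Ioo (0 : ℝ) 1)
    (mu : Fin m → ℝ)
    (hmunn : ∀ y, 0 ≤ mu y) (hmux : mu x = 0) (hmusum : ∑ y, mu y = 1)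
    (hmuqs : Matrix.vecMul mu (killed P x) = lam • mu)
    :
    ∀ T : ℕ, ∀ y : Fin m, y ≠ x →
      Matrix.vecMul mu (P ^ T) y ≤
        lam ^ T * mu y + (1 - lam) * ∑ s ∈ Finset.range T, (P ^ s) x y := by
  obtain ⟨hlam0, hlam1⟩ := hlam
  have hC : (0:ℝ) ≤ 1 - lam := by linarith
  have hpow : ∀ (s : ℕ) (w : Fin m), (P ^ (s+1)) x w = ∑ z, (P ^ s) x z * P z w := by
    intro s w; rw [pow_succ, Matrix.mul_apply]
  have hstepA : ∀ y : Fin m, y ≠ x → ∑ z, mu z * P z y = lam * mu y := by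
    intro y hy
    have h := congrFun hmuqs y
    simp only [Matrix.vecMul, dotProduct, Pi.smul_apply, smul_eq_mul] at h
    rw [← h]
    refine Finset.sum_congr rfl fun z _ => ?_
    by_cases hz : z = x
    · simp [hz, hmux, killed]
    · simp [killed, hz, hy]
  have hstepB : ∑ z, mu z * P z x = 1 - lam := by
    have h1 : ∑ y, ∑ z, mu z * P z y = 1 := by
      rw [Finset.sum_comm]
      calc ∑ z, ∑ y, mu z * P z y = ∑ z : Fin m, mu z * ∑ y, P z y := by
            simp [Finset.mul_sum]
        _ = 1 := by simp [hrow, hmusum]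
    have h2 : ∑ y ∈ Finset.univ.erase x, ∑ z, mu z * P z y = lam := by
      calc ∑ y ∈ Finset.univ.erase x, ∑ z, mu z * P z y
          = ∑ y ∈ Finset.univ.erase x, lam * mu y :=
            Finset.sum_congr rfl fun y hy => hstepA y (Finset.ne_of_mem_erase hy)
        _ = lam * ∑ y ∈ Finset.univ.erase x, mu y := by rw [Finset.mul_sum]
        _ = lam := by
            rw [Finset.sum_erase _ (by simp [hmux] : mu x = 0), hmusum, mul_one]
    have h3 : (∑ y ∈ Finset.univ.erase x, ∑ z, mu z * P z y) + ∑ z, mu z * P z x = 1 := by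
      rw [Finset.sum_erase_add Finset.univ _ (Finset.mem_univ x), h1]
    linarith
  have hvm : ∀ (T : ℕ) (w : Fin m),
      Matrix.vecMul mu (P ^ (T+1)) w = ∑ z, (Matrix.vecMul mu (P ^ T)) z * P z w := by
    intro T w
    rw [pow_succ, ← Matrix.vecMul_vecMul]
    simp [Matrix.vecMul, dotProduct]
  have main : ∀ T : ℕ,
      Matrix.vecMul mu (P ^ T) x ≤ (1-lam) * ∑ s ∈ Finset.range T, (P ^ s) x x ∧
      ∀ y, y ≠ x → Matrix.vecMul mu (P ^ T) y ≤
        lam ^ T * mu y + (1-lam) * ∑ s ∈ Finset.range T, (P ^ s) x y := by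
    intro T
    induction T with
    | zero =>
      constructor
      · simp [Matrix.vecMul_one, hmux]
      · intro y hy; simp [Matrix.vecMul_one]
    | succ T ih =>
      have S : Fin m → ℝ := fun z => ∑ s ∈ Finset.range T, (P ^ s) x z
      have bound : ∀ w, (∑ z, (Matrix.vecMul mu (P ^ T)) z * P z w) ≤
          (∑ z ∈ Finset.univ.erase x,
            (lam ^ T * mu z + (1-lam) * ∑ s ∈ Finset.range T, (P ^ s) x z) * P z w)
          + ((1-lam) * ∑ s ∈ Finset.range T, (P ^ s) x x) * P x w := by
        intro w
        rw [← Finset.sum_erase_add Finset.univ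
          (fun z => (Matrix.vecMul mu (P ^ T)) z * P z w) (Finset.mem_univ x)]
        apply add_le_add
        · exact Finset.sum_le_sum fun z hz =>
            mul_le_mul_of_nonneg_right (ih.2 z (Finset.ne_of_mem_erase hz)) (hnn z w)
        · exact mul_le_mul_of_nonneg_right ih.1 (hnn x w)
      have key : ∀ w, (∑ z ∈ Finset.univ.erase x,
            (lam ^ T * mu z + (1-lam) * ∑ s ∈ Finset.range T, (P ^ s) x z) * P z w)
          + ((1-lam) * ∑ s ∈ Finset.range T, (P ^ s) x x) * P x w
          = lam ^ T * (∑ z, mu z * P z w)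
            + (1-lam) * ∑ s ∈ Finset.range T, (P ^ (s+1)) x w := by
        intro w
        have e4 : ∑ z, (∑ s ∈ Finset.range T, (P ^ s) x z) * P z w
            = ∑ s ∈ Finset.range T, (P ^ (s+1)) x w := by
          simp only [Finset.sum_mul]
          rw [Finset.sum_comm]
          exact Finset.sum_congr rfl fun s _ => (hpow s w).symm
        have e1 : ∑ z ∈ Finset.univ.erase x,
              (lam ^ T * mu z + (1-lam) * ∑ s ∈ Finset.range T, (P ^ s) x z) * P z w
            = (∑ z ∈ Finset.univ.erase x, lam ^ T * (mu z * P z w))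
              + ∑ z ∈ Finset.univ.erase x,
                  (1-lam) * ((∑ s ∈ Finset.range T, (P ^ s) x z) * P z w) := by
          rw [← Finset.sum_add_distrib]
          exact Finset.sum_congr rfl fun z _ => by ring
        have e2 : ∑ z ∈ Finset.univ.erase x, lam ^ T * (mu z * P z w)
            = lam ^ T * ∑ z, mu z * P z w := by
          rw [← Finset.mul_sum]
          congr 1
          exact Finset.sum_erase _ (by simp [hmux])
        have e3 : (∑ z ∈ Finset.univ.erase x,
              (1-lam) * ((∑ s ∈ Finset.range T, (P ^ s) x z) * P z w))
            + ((1-lam) * ∑ s ∈ Finset.range T, (P ^ s) x x) * P x w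
            = (1-lam) * ∑ s ∈ Finset.range T, (P ^ (s+1)) x w := by
          rw [mul_assoc, ← Finset.mul_sum, ← mul_add,
            Finset.sum_erase_add Finset.univ
              (fun z => (∑ s ∈ Finset.range T, (P ^ s) x z) * P z w) (Finset.mem_univ x),
            e4]
        rw [e1, e2, add_assoc, e3]
      constructor
      · calc Matrix.vecMul mu (P ^ (T+1)) x
            = ∑ z, (Matrix.vecMul mu (P ^ T)) z * P z x := hvm T x
          _ ≤ _ := bound x
          _ = lam ^ T * (∑ z, mu z * P z x)
              + (1-lam) * ∑ s ∈ Finset.range T, (P ^ (s+1)) x x := key x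
          _ = lam ^ T * (1 - lam)
              + (1-lam) * ∑ s ∈ Finset.range T, (P ^ (s+1)) x x := by rw [hstepB]
          _ ≤ (1-lam) * 1 + (1-lam) * ∑ s ∈ Finset.range T, (P ^ (s+1)) x x := by
              have h1 : lam ^ T ≤ 1 := pow_le_one₀ (le_of_lt hlam0) (le_of_lt hlam1)
              nlinarith
          _ = (1-lam) * ∑ s ∈ Finset.range (T+1), (P ^ s) x x := by
              rw [Finset.sum_range_succ']
              simp [Matrix.one_apply_eq]
              ring
      · intro y hy
        calc Matrix.vecMul mu (P ^ (T+1)) y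
            = ∑ z, (Matrix.vecMul mu (P ^ T)) z * P z y := hvm T y
          _ ≤ _ := bound y
          _ = lam ^ T * (∑ z, mu z * P z y)
              + (1-lam) * ∑ s ∈ Finset.range T, (P ^ (s+1)) x y := key y
          _ = lam ^ T * (lam * mu y)
              + (1-lam) * ∑ s ∈ Finset.range T, (P ^ (s+1)) x y := by rw [hstepA y hy]
          _ = lam ^ (T+1) * mu y
              + (1-lam) * ∑ s ∈ Finset.range (T+1), (P ^ s) x y := by
              rw [Finset.sum_range_succ', pow_succ]
              have h0 : (P ^ 0) x y = 0 := by
                rw [pow_zero]; exact Matrix.one_apply_ne (Ne.symm hy)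
              rw [h0]
              ring
  intro T y hy
  exact (main T).2 y hy
end

section
/- Entrywise comparison of quasi-stationary and stationary distributions: under (HP1)–(HP3), for every ε > 0 there exists N such that for all n ≥ N and all y ∈ X_n ∖ {x_n}, μ⋆_n(y) ≤ (1 + ε) · π_n(y). -/
open Finset Filter

set_option maxHeartbeats 1000000

section AuxQSD

variable {n : ℕ}

private lemma qsd_pow_nonneg (P : Matrix (Fin n) (Fin n) ℝ) (h : ∀ y z, 0 ≤ P y z) :
    ∀ (m : ℕ) (y z : Fin n), 0 ≤ (P ^ m) y z := by
  intro m
  induction m with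
  | zero =>
    intro y z
    simp only [pow_zero, Matrix.one_apply]
    split <;> norm_num
  | succ m ih =>
    intro y z
    rw [pow_succ, Matrix.mul_apply]
    exact Finset.sum_nonneg fun w _ => mul_nonneg (ih y w) (h w z)

private lemma qsd_rowsum_pow (P : Matrix (Fin n) (Fin n) ℝ) (hrow : ∀ y, ∑ z, P y z = 1) :
    ∀ (m : ℕ) (y : Fin n), ∑ z, (P ^ m) y z = 1 := by
  intro m
  induction m with
  | zero => intro y; simp [Matrix.one_apply]
  | succ m ih =>
    intro y
    simp only [pow_succ, Matrix.mul_apply]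
    rw [Finset.sum_comm]
    calc ∑ w, ∑ z, (P ^ m) y w * P w z
        = ∑ w, (P ^ m) y w * ∑ z, P w z := by
          refine Finset.sum_congr rfl fun w _ => ?_
          rw [Finset.mul_sum]
      _ = ∑ w, (P ^ m) y w := by
          refine Finset.sum_congr rfl fun w _ => ?_
          rw [hrow w, mul_one]
      _ = 1 := ih y

private lemma qsd_killed_nonneg (P : Matrix (Fin n) (Fin n) ℝ) (x : Fin n)
    (h : ∀ y z, 0 ≤ P y z) : ∀ y z, 0 ≤ killed P x y z := by
  intro y z
  simp only [killed, Matrix.of_apply]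
  split
  · norm_num
  · exact h y z

private lemma qsd_killed_le (P : Matrix (Fin n) (Fin n) ℝ) (x : Fin n)
    (h : ∀ y z, 0 ≤ P y z) : ∀ y z, killed P x y z ≤ P y z := by
  intro y z
  simp only [killed, Matrix.of_apply]
  split
  · exact h y z
  · exact le_rfl

private lemma qsd_killed_pow_le (P : Matrix (Fin n) (Fin n) ℝ) (x : Fin n)
    (h : ∀ y z, 0 ≤ P y z) : ∀ (m : ℕ) (y z : Fin n), (killed P x ^ m) y z ≤ (P ^ m) y z := by
  intro m
  induction m with
  | zero => intro y z; simp
  | succ m ih =>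
    intro y z
    rw [pow_succ, pow_succ, Matrix.mul_apply, Matrix.mul_apply]
    refine Finset.sum_le_sum fun w _ => ?_
    exact mul_le_mul (ih y w) (qsd_killed_le P x h w z) (qsd_killed_nonneg P x h w z)
      (qsd_pow_nonneg P h m y w)

private lemma qsd_killed_apply_x_right (P : Matrix (Fin n) (Fin n) ℝ) (x : Fin n) (w : Fin n) :
    killed P x w x = 0 := by
  simp [killed]

private lemma qsd_killed_pow_x_right (P : Matrix (Fin n) (Fin n) ℝ) (x : Fin n) (m : ℕ)
    (z : Fin n) : (killed P x ^ (m + 1)) z x = 0 := by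
  rw [pow_succ, Matrix.mul_apply]
  refine Finset.sum_eq_zero fun w _ => ?_
  rw [qsd_killed_apply_x_right, mul_zero]

private lemma qsd_vecMul_pow (lam : ℝ) (mu : Fin n → ℝ) (K : Matrix (Fin n) (Fin n) ℝ)
    (h : Matrix.vecMul mu K = lam • mu) :
    ∀ m : ℕ, Matrix.vecMul mu (K ^ m) = lam ^ m • mu := by
  intro m
  induction m with
  | zero => simp
  | succ m ih =>
    rw [pow_succ, ← Matrix.vecMul_vecMul, ih, Matrix.smul_vecMul, h, smul_smul, ← pow_succ]

private lemma qsd_vecMul_stat_pow (pi : Fin n → ℝ) (P : Matrix (Fin n) (Fin n) ℝ)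
    (h : Matrix.vecMul pi P = pi) : ∀ m : ℕ, Matrix.vecMul pi (P ^ m) = pi := by
  intro m
  induction m with
  | zero => simp
  | succ m ih => rw [pow_succ, ← Matrix.vecMul_vecMul, ih, h]

/-- Survival probability lower bound: the row sums of the powers of the killed matrix are
at least `1 - Σ_{t=1}^m P^t(z,x)` (union bound over the hitting time of `x`). -/
private lemma qsd_survival (P : Matrix (Fin n) (Fin n) ℝ) (x : Fin n)
    (h0 : ∀ y z, 0 ≤ P y z) (hrow : ∀ y, ∑ z, P y z = 1) :
    ∀ (m : ℕ) (z : Fin n), z ≠ x →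
      1 - ∑ t ∈ Finset.range m, (P ^ (t + 1)) z x ≤ ∑ z', (killed P x ^ m) z z' := by
  intro m
  induction m with
  | zero => intro z _; simp [Matrix.one_apply]
  | succ m ih =>
    intro z hz
    have hexp : ∑ z', (killed P x ^ (m + 1)) z z'
        = ∑ w, killed P x z w * ∑ z', (killed P x ^ m) w z' := by
      rw [pow_succ']
      simp only [Matrix.mul_apply]
      rw [Finset.sum_comm]
      exact Finset.sum_congr rfl fun w _ => (Finset.mul_sum _ _ _).symm
    have hdrop : ∑ w, killed P x z w * ∑ z', (killed P x ^ m) w z'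
        = ∑ w ∈ Finset.univ.erase x, killed P x z w * ∑ z', (killed P x ^ m) w z' := by
      rw [Finset.sum_erase_eq_sub (Finset.mem_univ x), qsd_killed_apply_x_right, zero_mul,
        sub_zero]
    have hkzw : ∀ w : Fin n, w ≠ x → killed P x z w = P z w := by
      intro w hw
      simp [killed, hz, hw]
    have hcross : ∀ t ∈ Finset.range m,
        ∑ w ∈ Finset.univ.erase x, P z w * (P ^ (t + 1)) w x ≤ (P ^ (t + 2)) z x := by
      intro t _
      have hpow : (P ^ (t + 2)) z x = ∑ w, P z w * (P ^ (t + 1)) w x := by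
        have h2 : P ^ (t + 2) = P * P ^ (t + 1) := by
          rw [← pow_succ']
        rw [h2, Matrix.mul_apply]
      rw [hpow]
      refine Finset.sum_le_sum_of_subset_of_nonneg (Finset.erase_subset _ _) ?_
      intro w _ _
      exact mul_nonneg (h0 z w) (qsd_pow_nonneg P h0 _ w x)
    have hPsum : ∑ w ∈ Finset.univ.erase x, P z w = 1 - P z x := by
      rw [Finset.sum_erase_eq_sub (Finset.mem_univ x), hrow z]
    calc 1 - ∑ t ∈ Finset.range (m + 1), (P ^ (t + 1)) z x
        = 1 - P z x - ∑ t ∈ Finset.range m, (P ^ (t + 2)) z x := by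
          rw [Finset.sum_range_succ' (fun t => (P ^ (t + 1)) z x) m]
          simp only [zero_add, pow_one]
          ring
      _ ≤ ∑ w ∈ Finset.univ.erase x, P z w * (1 - ∑ t ∈ Finset.range m, (P ^ (t + 1)) w x) := by
          have e1 : ∑ w ∈ Finset.univ.erase x,
              P z w * (1 - ∑ t ∈ Finset.range m, (P ^ (t + 1)) w x)
              = (∑ w ∈ Finset.univ.erase x, P z w)
                - ∑ w ∈ Finset.univ.erase x, ∑ t ∈ Finset.range m, P z w * (P ^ (t + 1)) w x := by
            rw [← Finset.sum_sub_distrib]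
            refine Finset.sum_congr rfl fun w _ => ?_
            rw [mul_sub, mul_one, Finset.mul_sum]
          have e2 : ∑ w ∈ Finset.univ.erase x, ∑ t ∈ Finset.range m, P z w * (P ^ (t + 1)) w x
              = ∑ t ∈ Finset.range m, ∑ w ∈ Finset.univ.erase x, P z w * (P ^ (t + 1)) w x :=
            Finset.sum_comm
          have hsum := Finset.sum_le_sum hcross
          rw [e1, e2, hPsum]
          linarith
      _ ≤ ∑ w ∈ Finset.univ.erase x, killed P x z w * ∑ z', (killed P x ^ m) w z' := by
          refine Finset.sum_le_sum fun w hw => ?_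
          have hwx : w ≠ x := Finset.ne_of_mem_erase hw
          rw [← hkzw w hwx]
          exact mul_le_mul_of_nonneg_left (ih w hwx) (qsd_killed_nonneg P x h0 z w)
      _ = ∑ z', (killed P x ^ (m + 1)) z z' := by rw [← hdrop, ← hexp]

end AuxQSD

theorem quasistationary_entrywise_upper_bound
    (P : (n : ℕ) → Matrix (Fin n) (Fin n) ℝ)
    (pi : (n : ℕ) → Fin n → ℝ)
    (x : (n : ℕ) → Fin n)
    (T : ℕ → ℕ) (c : ℝ)
    (hc : 2 < c)
    (hT : Filter.Tendsto T Filter.atTop Filter.atTop)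
    (hnn : ∀ n : ℕ, 2 ≤ n → ∀ y z : Fin n, 0 ≤ P n y z)
    (hrow : ∀ n : ℕ, 2 ≤ n → ∀ y : Fin n, ∑ z, P n y z = 1)
    (hirr : ∀ n : ℕ, 2 ≤ n → ∀ y z : Fin n, ∃ t : ℕ, 0 < (P n ^ t) y z)
    (hpinn : ∀ n : ℕ, 2 ≤ n → ∀ y : Fin n, 0 ≤ pi n y)
    (hpisum : ∀ n : ℕ, 2 ≤ n → ∑ y, pi n y = 1)
    (hpistat : ∀ n : ℕ, 2 ≤ n → Matrix.vecMul (pi n) (P n) = pi n)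
    (hpiuniq : ∀ n : ℕ, 2 ≤ n → ∀ rho : Fin n → ℝ, (∀ y, 0 ≤ rho y) →
      (∑ y, rho y = 1) → Matrix.vecMul rho (P n) = rho → rho = pi n)
    (hkirr : ∀ n : ℕ, 2 ≤ n → ∀ y z : Fin n, y ≠ x n → z ≠ x n →
      ∃ t : ℕ, 0 < ((killed (P n) (x n)) ^ t) y z)
    (lam : ℕ → ℝ) (mu : (n : ℕ) → Fin n → ℝ)
    (hlam : ∀ n : ℕ, 2 ≤ n → lam n ∈ Set.Ioo (0 : ℝ) 1)
    (hmunn : ∀ n : ℕ, 2 ≤ n → ∀ y : Fin n, 0 ≤ mu n y)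
    (hmux : ∀ n : ℕ, 2 ≤ n → mu n (x n) = 0)
    (hmusum : ∀ n : ℕ, 2 ≤ n → ∑ y, mu n y = 1)
    (hmuqs : ∀ n : ℕ, 2 ≤ n →
      Matrix.vecMul (mu n) (killed (P n) (x n)) = lam n • mu n)
    (HP1 : ∀ ε : ℝ, 0 < ε → ∃ N : ℕ, ∀ n : ℕ, N ≤ n → ∀ y z : Fin n,
      (n : ℝ) ^ c * |(P n ^ T n) y z - pi n z| < ε)
    (HP2 : ∀ ε : ℝ, 0 < ε → ∃ N : ℕ, ∀ n : ℕ, N ≤ n → ∀ y : Fin n,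
      (T n : ℝ) * pi n y < ε)
    (HP3 : ∀ M : ℝ, ∃ N : ℕ, ∀ n : ℕ, N ≤ n → ∀ y : Fin n,
      M < (n : ℝ) ^ 2 * pi n y)
    :
    ∀ ε : ℝ, 0 < ε → ∃ N : ℕ, ∀ n : ℕ, N ≤ n → ∀ y : Fin n, y ≠ x n →
      mu n y ≤ (1 + ε) * pi n y := by
  classical
  intro ε hε
  set δ : ℝ := min ε 1 / 16 with hδdef
  have hδpos : 0 < δ := by
    have : 0 < min ε 1 := lt_min hε one_pos
    positivity
  have hδ16 : 16 * δ ≤ 1 := by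
    have : min ε 1 ≤ 1 := min_le_right _ _
    rw [hδdef]; linarith
  have hδε : 16 * δ ≤ ε := by
    have : min ε 1 ≤ ε := min_le_left _ _
    rw [hδdef]; linarith
  obtain ⟨N₁, hN₁⟩ := HP1 (δ ^ 2) (by positivity)
  obtain ⟨N₂, hN₂⟩ := HP2 (δ ^ 2) (by positivity)
  obtain ⟨N₃, hN₃⟩ := HP3 1
  obtain ⟨N₄, hN₄⟩ := Filter.eventually_atTop.mp (hT.eventually_ge_atTop 1)
  refine ⟨N₁ + N₂ + N₃ + N₄ + 2, fun n hn y hyx => ?_⟩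
  have h2 : 2 ≤ n := by omega
  have hT1 : 1 ≤ T n := hN₄ n (by omega)
  have hT1' : (1 : ℝ) ≤ (T n : ℝ) := by exact_mod_cast hT1
  have hn0 : (0 : ℝ) < (n : ℝ) := by
    have : (0 : ℕ) < n := by omega
    exact_mod_cast this
  have hn1 : (1 : ℝ) ≤ (n : ℝ) := by
    have : (1 : ℕ) ≤ n := by omega
    exact_mod_cast this
  have hncpos : (0 : ℝ) < (n : ℝ) ^ c := Real.rpow_pos_of_pos hn0 c
  set e : ℝ := δ ^ 2 / (n : ℝ) ^ c with hedef
  have hepos : 0 < e := by positivity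
  have hπnn : ∀ z, 0 ≤ pi n z := hpinn n h2
  have hμnn : ∀ z, 0 ≤ mu n z := hmunn n h2
  have hlamn := hlam n h2
  -- HP1 consequence
  have hPT : ∀ w z' : Fin n, (P n ^ T n) w z' ≤ pi n z' + e := by
    intro w z'
    have h := hN₁ n (by omega) w z'
    have habs : |(P n ^ T n) w z' - pi n z'| < e := by
      rw [hedef, lt_div_iff₀ hncpos]
      calc |(P n ^ T n) w z' - pi n z'| * (n : ℝ) ^ c
          = (n : ℝ) ^ c * |(P n ^ T n) w z' - pi n z'| := by ring
        _ < δ ^ 2 := h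
    have h2' := (abs_lt.mp habs).2
    linarith
  -- rpow comparisons
  have hn2pow : ((n : ℝ)) ^ (2 : ℕ) ≤ (n : ℝ) ^ c := by
    rw [← Real.rpow_natCast (n : ℝ) 2]
    exact Real.rpow_le_rpow_of_exponent_le hn1 (by push_cast; linarith)
  have hn1pow : ((n : ℝ)) ≤ (n : ℝ) ^ c := by
    calc (n : ℝ) = (n : ℝ) ^ (1 : ℝ) := (Real.rpow_one _).symm
      _ ≤ (n : ℝ) ^ c := Real.rpow_le_rpow_of_exponent_le hn1 (by linarith)
  -- HP3 consequence
  have hπlb : ∀ z, 1 / (n : ℝ) ^ (2 : ℕ) < pi n z := by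
    intro z
    have h := hN₃ n (by omega) z
    rw [div_lt_iff₀ (by positivity)]
    nlinarith
  have hπxpos : 0 < pi n (x n) := lt_trans (by positivity) (hπlb (x n))
  -- HP2 consequences
  have hTp : (T n : ℝ) * pi n (x n) < δ ^ 2 := hN₂ n (by omega) (x n)
  have hpx_lt : pi n (x n) < δ ^ 2 := by nlinarith
  have hTub : (T n : ℝ) < δ ^ 2 * (n : ℝ) ^ (2 : ℕ) := by
    have h1 := hπlb (x n)
    have hn2pos : (0 : ℝ) < (n : ℝ) ^ (2 : ℕ) := by positivity
    rw [div_lt_iff₀ hn2pos] at h1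
    nlinarith
  have hne : (n : ℝ) * e ≤ δ ^ 2 := by
    rw [hedef]
    calc (n : ℝ) * (δ ^ 2 / (n : ℝ) ^ c) = δ ^ 2 * ((n : ℝ) / (n : ℝ) ^ c) := by ring
      _ ≤ δ ^ 2 * 1 := by
          refine mul_le_mul_of_nonneg_left ?_ (by positivity)
          exact div_le_one_of_le₀ hn1pow (le_of_lt hncpos)
      _ = δ ^ 2 := mul_one _
  have hTe : (T n : ℝ) * e ≤ δ ^ 2 * δ ^ 2 := by
    calc (T n : ℝ) * e ≤ (δ ^ 2 * (n : ℝ) ^ (2 : ℕ)) * e :=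
          mul_le_mul_of_nonneg_right (le_of_lt hTub) (le_of_lt hepos)
      _ = δ ^ 2 * δ ^ 2 * ((n : ℝ) ^ (2 : ℕ) / (n : ℝ) ^ c) := by rw [hedef]; ring
      _ ≤ δ ^ 2 * δ ^ 2 * 1 := by
          refine mul_le_mul_of_nonneg_left ?_ (by positivity)
          exact div_le_one_of_le₀ hn2pow (le_of_lt hncpos)
      _ = δ ^ 2 * δ ^ 2 := mul_one _
  -- mixing at all times ≥ T
  have hMix : ∀ (m : ℕ) (z w : Fin n), (P n ^ (m + T n)) z w ≤ pi n w + e := by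
    intro m z w
    rw [pow_add, Matrix.mul_apply]
    calc ∑ v, (P n ^ m) z v * (P n ^ T n) v w
        ≤ ∑ v, (P n ^ m) z v * (pi n w + e) := Finset.sum_le_sum fun v _ =>
          mul_le_mul_of_nonneg_left (hPT v w) (qsd_pow_nonneg _ (hnn n h2) m z v)
      _ = pi n w + e := by rw [← Finset.sum_mul, qsd_rowsum_pow _ (hrow n h2) m z, one_mul]
  -- stationarity of powers
  have hstat : ∀ t : ℕ, ∑ z, pi n z * (P n ^ t) z (x n) = pi n (x n) := by
    intro t
    have h := congrFun (qsd_vecMul_stat_pow (pi n) (P n) (hpistat n h2) t) (x n)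
    simpa [Matrix.vecMul, dotProduct] using h
  -- the good set
  set hitp : Fin n → ℝ := fun z => ∑ t ∈ Finset.range (T n), (P n ^ (t + 1)) z (x n)
    with hhitdef
  have hhitnn : ∀ z, 0 ≤ hitp z :=
    fun z => Finset.sum_nonneg fun t _ => qsd_pow_nonneg _ (hnn n h2) _ z (x n)
  set G : Finset (Fin n) := (Finset.univ.erase (x n)).filter (fun z => hitp z ≤ δ) with hGdef
  set B : Finset (Fin n) := (Finset.univ.erase (x n)).filter (fun z => ¬ hitp z ≤ δ) with hBdef
  have hGB : ∀ f : Fin n → ℝ, ∑ z ∈ G, f z + ∑ z ∈ B, f z = ∑ z ∈ Finset.univ.erase (x n), f z :=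
    fun f => Finset.sum_filter_add_sum_filter_not _ _ f
  -- π-mass of the bad set
  have hkey : ∑ z ∈ Finset.univ.erase (x n), pi n z * hitp z ≤ (T n : ℝ) * pi n (x n) := by
    calc ∑ z ∈ Finset.univ.erase (x n), pi n z * hitp z
        = ∑ t ∈ Finset.range (T n), ∑ z ∈ Finset.univ.erase (x n),
            pi n z * (P n ^ (t + 1)) z (x n) := by
          rw [← Finset.sum_comm]
          exact Finset.sum_congr rfl fun z _ => Finset.mul_sum _ _ _
      _ ≤ ∑ _t ∈ Finset.range (T n), pi n (x n) := by
          refine Finset.sum_le_sum fun t _ => ?_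
          have h1 : ∑ z ∈ Finset.univ.erase (x n), pi n z * (P n ^ (t + 1)) z (x n)
              ≤ ∑ z, pi n z * (P n ^ (t + 1)) z (x n) := by
            refine Finset.sum_le_sum_of_subset_of_nonneg (Finset.erase_subset _ _) ?_
            intro w _ _
            exact mul_nonneg (hπnn w) (qsd_pow_nonneg _ (hnn n h2) _ w (x n))
          rw [hstat (t + 1)] at h1
          exact h1
      _ = (T n : ℝ) * pi n (x n) := by
          rw [Finset.sum_const, Finset.card_range, nsmul_eq_mul]
  have hπB : ∑ z ∈ B, pi n z ≤ δ := by
    have h1 : δ * ∑ z ∈ B, pi n z ≤ ∑ z ∈ B, pi n z * hitp z := by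
      rw [Finset.mul_sum]
      refine Finset.sum_le_sum fun z hz => ?_
      have hzB := (Finset.mem_filter.mp hz).2
      have hδlt : δ < hitp z := not_le.mp hzB
      nlinarith [hπnn z]
    have h2' : ∑ z ∈ B, pi n z * hitp z ≤ ∑ z ∈ Finset.univ.erase (x n), pi n z * hitp z := by
      refine Finset.sum_le_sum_of_subset_of_nonneg (Finset.filter_subset _ _) ?_
      intro w _ _
      exact mul_nonneg (hπnn w) (hhitnn w)
    nlinarith [hTp]
  -- G is nonempty
  have hGne : G.Nonempty := by
    by_contra hge
    rw [Finset.not_nonempty_iff_eq_empty] at hge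
    have h0 : ∑ z ∈ G, pi n z = 0 := by rw [hge]; simp
    have h1 : ∑ z ∈ Finset.univ.erase (x n), pi n z = 1 - pi n (x n) := by
      rw [Finset.sum_erase_eq_sub (Finset.mem_univ _), hpisum n h2]
    have h2' := hGB (pi n)
    rw [h0, h1, zero_add] at h2'
    rw [h2'] at hπB
    nlinarith
  -- row sums of the killed power restricted to G
  have hRowG : ∀ z ∈ G, 1 - 3 * δ ≤ ∑ z' ∈ G, (killed (P n) (x n) ^ (2 * T n)) z z' := by
    intro z hz
    obtain ⟨hzer, hzG⟩ := Finset.mem_filter.mp hz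
    have hzx : z ≠ x n := Finset.ne_of_mem_erase hzer
    have hfull : 1 - ∑ t ∈ Finset.range (2 * T n), (P n ^ (t + 1)) z (x n)
        ≤ ∑ z', (killed (P n) (x n) ^ (2 * T n)) z z' :=
      qsd_survival _ _ (hnn n h2) (hrow n h2) _ z hzx
    have hsplit : ∑ t ∈ Finset.range (2 * T n), (P n ^ (t + 1)) z (x n)
        ≤ δ + (T n : ℝ) * (pi n (x n) + e) := by
      rw [Finset.range_eq_Ico,
        ← Finset.sum_Ico_consecutive _ (Nat.zero_le (T n)) (by omega : T n ≤ 2 * T n)]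
      have h2nd : ∑ t ∈ Finset.Ico (T n) (2 * T n), (P n ^ (t + 1)) z (x n)
          ≤ (T n : ℝ) * (pi n (x n) + e) := by
        calc ∑ t ∈ Finset.Ico (T n) (2 * T n), (P n ^ (t + 1)) z (x n)
            ≤ ∑ _t ∈ Finset.Ico (T n) (2 * T n), (pi n (x n) + e) := by
              refine Finset.sum_le_sum fun t ht => ?_
              obtain ⟨ht1, _⟩ := Finset.mem_Ico.mp ht
              have heq : t + 1 = (t + 1 - T n) + T n := by omega
              rw [heq]
              exact hMix _ z (x n)
          _ = (T n : ℝ) * (pi n (x n) + e) := by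
              rw [Finset.sum_const, Nat.card_Ico, nsmul_eq_mul]
              congr 1
              have : 2 * T n - T n = T n := by omega
              rw [this]
      have h1st : ∑ t ∈ Finset.Ico 0 (T n), (P n ^ (t + 1)) z (x n) ≤ δ := by
        rw [← Finset.range_eq_Ico]
        exact hzG
      linarith
    have hxterm : (killed (P n) (x n) ^ (2 * T n)) z (x n) = 0 := by
      have h2T : 2 * T n = (2 * T n - 1) + 1 := by omega
      rw [h2T]
      exact qsd_killed_pow_x_right _ _ _ z
    have herase : ∑ z' ∈ Finset.univ.erase (x n), (killed (P n) (x n) ^ (2 * T n)) z z'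
        = ∑ z', (killed (P n) (x n) ^ (2 * T n)) z z' := by
      rw [Finset.sum_erase_eq_sub (Finset.mem_univ _), hxterm, sub_zero]
    have hBad : ∑ z' ∈ B, (killed (P n) (x n) ^ (2 * T n)) z z' ≤ δ + (n : ℝ) * e := by
      have hstep : ∀ z' ∈ B, (killed (P n) (x n) ^ (2 * T n)) z z' ≤ pi n z' + e := by
        intro z' _
        refine le_trans (qsd_killed_pow_le _ _ (hnn n h2) _ z z') ?_
        have h2T : 2 * T n = T n + T n := by omega
        rw [h2T]
        exact hMix _ z z'
      calc ∑ z' ∈ B, (killed (P n) (x n) ^ (2 * T n)) z z'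
          ≤ ∑ z' ∈ B, (pi n z' + e) := Finset.sum_le_sum hstep
        _ = (∑ z' ∈ B, pi n z') + (B.card : ℝ) * e := by
            rw [Finset.sum_add_distrib, Finset.sum_const, nsmul_eq_mul]
        _ ≤ δ + (n : ℝ) * e := by
            have hcard : (B.card : ℝ) ≤ (n : ℝ) := by
              have : B.card ≤ n := le_trans (Finset.card_le_univ B) (by simp)
              exact_mod_cast this
            have := mul_le_mul_of_nonneg_right hcard (le_of_lt hepos)
            linarith
    have hGBsum := hGB (fun z' => (killed (P n) (x n) ^ (2 * T n)) z z')
    have : ∑ z' ∈ G, (killed (P n) (x n) ^ (2 * T n)) z z'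
        = (∑ z', (killed (P n) (x n) ^ (2 * T n)) z z')
          - ∑ z' ∈ B, (killed (P n) (x n) ^ (2 * T n)) z z' := by
      rw [← herase, ← hGBsum]
      ring
    rw [this]
    have hkeyineq : δ ^ 2 + δ ^ 2 * δ ^ 2 + δ ^ 2 ≤ δ := by
      have h2 : δ * δ ≤ δ * (1 / 16) := mul_le_mul_of_nonneg_left (by linarith) hδpos.le
      have hsq1 : δ ^ 2 ≤ 1 := by nlinarith
      have h4 : δ ^ 2 * δ ^ 2 ≤ δ ^ 2 := by nlinarith [sq_nonneg δ]
      nlinarith [h2, h4]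
    have h5 : (1 : ℝ) - (δ + (T n : ℝ) * (pi n (x n) + e))
        ≤ ∑ z', (killed (P n) (x n) ^ (2 * T n)) z z' := by
      refine le_trans ?_ hfull
      linarith [hsplit]
    have h6 : (T n : ℝ) * (pi n (x n) + e) = (T n : ℝ) * pi n (x n) + (T n : ℝ) * e := by ring
    linarith [h5, hBad, hTp, hTe, hne, hkeyineq, h6]
  -- positivity of the QSD mass of G
  obtain ⟨z₀, hz₀⟩ : ∃ z₀, mu n z₀ ≠ 0 := by
    refine Finset.exists_ne_zero_of_sum_ne_zero (s := Finset.univ) ?_ |>.imp fun z h => h.2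
    rw [hmusum n h2]
    norm_num
  have hz₀pos : 0 < mu n z₀ := lt_of_le_of_ne (hμnn z₀) (Ne.symm hz₀)
  have hz₀x : z₀ ≠ x n := by
    intro h
    rw [h, hmux n h2] at hz₀pos
    exact lt_irrefl 0 hz₀pos
  obtain ⟨zg, hzg⟩ := hGne
  have hzgx : zg ≠ x n := Finset.ne_of_mem_erase (Finset.mem_filter.mp hzg).1
  obtain ⟨t₀, ht₀⟩ := hkirr n h2 z₀ zg hz₀x hzgx
  have hμzg : 0 < mu n zg := by
    have h1 : Matrix.vecMul (mu n) (killed (P n) (x n) ^ t₀) zg = lam n ^ t₀ * mu n zg := by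
      rw [qsd_vecMul_pow _ _ _ (hmuqs n h2) t₀]
      simp [smul_eq_mul]
    have h2' : mu n z₀ * (killed (P n) (x n) ^ t₀) z₀ zg
        ≤ Matrix.vecMul (mu n) (killed (P n) (x n) ^ t₀) zg := by
      have hvm : Matrix.vecMul (mu n) (killed (P n) (x n) ^ t₀) zg
          = ∑ w, mu n w * (killed (P n) (x n) ^ t₀) w zg := by
        simp [Matrix.vecMul, dotProduct]
      rw [hvm]
      exact Finset.single_le_sum
        (fun w _ => mul_nonneg (hμnn w)
          (qsd_pow_nonneg _ (qsd_killed_nonneg _ _ (hnn n h2)) t₀ w zg))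
        (Finset.mem_univ z₀)
    have hpos : 0 < lam n ^ t₀ * mu n zg := by
      rw [← h1]
      exact lt_of_lt_of_le (mul_pos hz₀pos ht₀) h2'
    nlinarith [pow_pos hlamn.1 t₀]
  have hμG : 0 < ∑ z ∈ G, mu n z :=
    lt_of_lt_of_le hμzg (Finset.single_le_sum (fun w _ => hμnn w) hzg)
  -- the eigenvalue lower bound
  have hlam2T : 1 - 3 * δ ≤ lam n ^ (2 * T n) := by
    have hid : ∑ z' ∈ G, Matrix.vecMul (mu n) (killed (P n) (x n) ^ (2 * T n)) z'
        = lam n ^ (2 * T n) * ∑ z' ∈ G, mu n z' := by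
      rw [qsd_vecMul_pow _ _ _ (hmuqs n h2)]
      simp only [Pi.smul_apply, smul_eq_mul]
      rw [Finset.mul_sum]
    have hexp : ∑ z' ∈ G, Matrix.vecMul (mu n) (killed (P n) (x n) ^ (2 * T n)) z'
        = ∑ z, mu n z * ∑ z' ∈ G, (killed (P n) (x n) ^ (2 * T n)) z z' := by
      simp only [Matrix.vecMul, dotProduct]
      rw [Finset.sum_comm]
      exact Finset.sum_congr rfl fun z _ => (Finset.mul_sum _ _ _).symm
    have hlow : (1 - 3 * δ) * ∑ z ∈ G, mu n z
        ≤ ∑ z' ∈ G, Matrix.vecMul (mu n) (killed (P n) (x n) ^ (2 * T n)) z' := by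
      rw [hexp]
      calc (1 - 3 * δ) * ∑ z ∈ G, mu n z = ∑ z ∈ G, mu n z * (1 - 3 * δ) := by
            rw [Finset.mul_sum]
            exact Finset.sum_congr rfl fun z _ => mul_comm _ _
        _ ≤ ∑ z ∈ G, mu n z * ∑ z' ∈ G, (killed (P n) (x n) ^ (2 * T n)) z z' :=
            Finset.sum_le_sum fun z hzz =>
              mul_le_mul_of_nonneg_left (hRowG z hzz) (hμnn z)
        _ ≤ ∑ z, mu n z * ∑ z' ∈ G, (killed (P n) (x n) ^ (2 * T n)) z z' := by
            refine Finset.sum_le_sum_of_subset_of_nonneg (Finset.subset_univ _) ?_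
            intro w _ _
            exact mul_nonneg (hμnn w) (Finset.sum_nonneg fun z' _ =>
              qsd_pow_nonneg _ (qsd_killed_nonneg _ _ (hnn n h2)) _ w z')
    rw [hid] at hlow
    exact le_of_mul_le_mul_right hlow hμG
  have hlamT : 1 - 3 * δ ≤ lam n ^ T n :=
    le_trans hlam2T (pow_le_pow_of_le_one (le_of_lt hlamn.1) (le_of_lt hlamn.2) (by omega))
  -- the entrywise bound
  have hμy : lam n ^ T n * mu n y ≤ pi n y + e := by
    have h1 : lam n ^ T n * mu n y
        = Matrix.vecMul (mu n) (killed (P n) (x n) ^ T n) y := by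
      rw [qsd_vecMul_pow _ _ _ (hmuqs n h2)]
      simp [smul_eq_mul]
    have h2' : Matrix.vecMul (mu n) (killed (P n) (x n) ^ T n) y
        ≤ ∑ w, mu n w * (P n ^ T n) w y := by
      have hvm : Matrix.vecMul (mu n) (killed (P n) (x n) ^ T n) y
          = ∑ w, mu n w * (killed (P n) (x n) ^ T n) w y := by
        simp [Matrix.vecMul, dotProduct]
      rw [hvm]
      exact Finset.sum_le_sum fun w _ =>
        mul_le_mul_of_nonneg_left (qsd_killed_pow_le _ _ (hnn n h2) _ w y) (hμnn w)
    have h3 : ∑ w, mu n w * (P n ^ T n) w y ≤ ∑ w, mu n w * (pi n y + e) :=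
      Finset.sum_le_sum fun w _ => mul_le_mul_of_nonneg_left (hPT w y) (hμnn w)
    have h4 : ∑ w, mu n w * (pi n y + e) = pi n y + e := by
      rw [← Finset.sum_mul, hmusum n h2, one_mul]
    rw [h1]
    linarith
  have hey : e ≤ δ ^ 2 * pi n y := by
    have h1 : e ≤ δ ^ 2 / (n : ℝ) ^ (2 : ℕ) := by
      rw [hedef]
      exact div_le_div_of_nonneg_left (by positivity) (by positivity) hn2pow
    have h2' := hπlb y
    have hn2pos : (0 : ℝ) < (n : ℝ) ^ (2 : ℕ) := by positivity
    calc e ≤ δ ^ 2 / (n : ℝ) ^ (2 : ℕ) := h1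
      _ = δ ^ 2 * (1 / (n : ℝ) ^ (2 : ℕ)) := by ring
      _ ≤ δ ^ 2 * pi n y :=
          mul_le_mul_of_nonneg_left (le_of_lt h2') (by positivity)
  have hfinal : (1 - 3 * δ) * mu n y ≤ (1 + δ ^ 2) * pi n y := by
    have ha : (1 - 3 * δ) * mu n y ≤ lam n ^ T n * mu n y :=
      mul_le_mul_of_nonneg_right hlamT (hμnn y)
    nlinarith
  have hcoef : 1 + δ ^ 2 ≤ (1 + ε) * (1 - 3 * δ) := by nlinarith
  have h13δ : 0 < 1 - 3 * δ := by nlinarith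
  nlinarith [hπnn y, mul_le_mul_of_nonneg_right hcoef (hπnn y)]
end
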